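/- arXiv:2108.00531 — 2 statements merged into one kernel-verified Lean document; each statement's English description precedes it below -/
import Mathlib

section
/- A monomial ideal I generated in a single degree is polymatroidal if and only if I satisfies the non-pure dual exchange property. -/
/-- A monomial in `K[x_1,...,x_n]` is identified with its exponent vector. -/
abbrev Mon (n : ℕ) := Fin n → ℕ

/-- Total degree of a monomial. -/
def degree {n : ℕ} (u : Mon n) : ℕ := ∑ i, u i

/-- A monomial ideal is identified with the set of exponent vectors of the monomials it
contains; this set is closed under multiplication by monomials. -/
def IsMonomialIdeal {n : ℕ} (I : Set (Mon n)) : Prop :=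
  ∀ u ∈ I, ∀ w : Mon n, u + w ∈ I

/-- The minimal monomial generating set `G(I)` of a monomial ideal: monomials of `I`
minimal with respect to divisibility (pointwise `≤` of exponent vectors). -/
def minGens {n : ℕ} (I : Set (Mon n)) : Set (Mon n) :=
  {u | u ∈ I ∧ ∀ v ∈ I, v ≤ u → v = u}

/-- `exch v i j` is the exponent vector of `x_j * (v / x_i)` (for `i ≠ j`). -/
def exch {n : ℕ} (v : Mon n) (i j : Fin n) : Mon n :=
  fun k => if k = i then v k - 1 else if k = j then v k + 1 else v k

/-- `component I d` is the ideal `I_⟨d⟩` generated by the degree-`d` monomials of `I`. -/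
def component {n : ℕ} (I : Set (Mon n)) (d : ℕ) : Set (Mon n) :=
  {w | ∃ u ∈ I, degree u = d ∧ u ≤ w}

/-- `I` is generated in a single degree. -/
def GeneratedInSingleDegree {n : ℕ} (I : Set (Mon n)) : Prop :=
  ∃ d, ∀ u ∈ minGens I, degree u = d

/-- A polymatroidal ideal: generated in a single degree and its generators satisfy the
exchange property. -/
def IsPolymatroidal {n : ℕ} (I : Set (Mon n)) : Prop :=
  GeneratedInSingleDegree I ∧
  ∀ u ∈ minGens I, ∀ v ∈ minGens I, ∀ i : Fin n, v i < u i →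
    ∃ j : Fin n, u j < v j ∧ exch u i j ∈ I

/-- Componentwise polymatroidal: each graded component ideal `I_⟨d⟩` is polymatroidal. -/
def ComponentwisePolymatroidal {n : ℕ} (I : Set (Mon n)) : Prop :=
  ∀ d : ℕ, IsPolymatroidal (component I d)

/-- Non-pure dual exchange property: for `u, v ∈ G(I)` with `deg u ≤ deg v` and
`deg_{x_i} v < deg_{x_i} u` there is `j` with `deg_{x_j} v > deg_{x_j} u` and
`x_i * (v / x_j) ∈ I`. -/
def NonPureDualExchange {n : ℕ} (I : Set (Mon n)) : Prop :=
  ∀ u ∈ minGens I, ∀ v ∈ minGens I, degree u ≤ degree v →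
    ∀ i : Fin n, v i < u i → ∃ j : Fin n, u j < v j ∧ exch v j i ∈ I

/-- Non-pure exchange property: for `u, v ∈ G(I)` with `deg u ≤ deg v` and
`deg_{x_i} v > deg_{x_i} u` there is `j` with `deg_{x_j} v < deg_{x_j} u` and
`x_j * (v / x_i) ∈ I`. -/
def NonPureExchange {n : ℕ} (I : Set (Mon n)) : Prop :=
  ∀ u ∈ minGens I, ∀ v ∈ minGens I, degree u ≤ degree v →
    ∀ i : Fin n, u i < v i → ∃ j : Fin n, v j < u j ∧ exch v i j ∈ I

/-- The monomial ideal generated by a set `G` of monomials. -/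
def genBy {n : ℕ} (G : Set (Mon n)) : Set (Mon n) := {w | ∃ u ∈ G, u ≤ w}

/-- The product of two monomial ideals (as sets of monomials). -/
def mulIdeal {n : ℕ} (I J : Set (Mon n)) : Set (Mon n) :=
  {w | ∃ u ∈ I, ∃ v ∈ J, w = u + v}

/-- The product of a monomial ideal with the monomial `u`. -/
def mulMon {n : ℕ} (u : Mon n) (I : Set (Mon n)) : Set (Mon n) :=
  (fun v => u + v) '' I

/-- Strong exchange property: for all generators `u, v` and all `i, j` with
`deg_{x_i} u > deg_{x_i} v` and `deg_{x_j} u < deg_{x_j} v`, `x_j * (u / x_i) ∈ I`. -/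
def StrongExchange {n : ℕ} (I : Set (Mon n)) : Prop :=
  ∀ u ∈ minGens I, ∀ v ∈ minGens I, ∀ i j : Fin n,
    v i < u i → u j < v j → exch u i j ∈ I

/-- The Veronese type ideal `I_{(d; a_1,...,a_n)}`: generated by all monomials of
degree `d` with `deg_{x_i} ≤ a i` for all `i`. -/
def veronese (n d : ℕ) (a : Fin n → ℕ) : Set (Mon n) :=
  {w | ∃ u : Mon n, degree u = d ∧ (∀ i, u i ≤ a i) ∧ u ≤ w}

/-- A list of monomials is an admissible order if each colon ideal
`(u_1,...,u_{i-1}) : u_i` is generated by a subset `S` of the variables. -/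
def AdmissibleOrder {n : ℕ} (L : List (Mon n)) : Prop :=
  ∀ i : Fin L.length, ∃ S : Set (Fin n),
    ∀ w : Mon n, (w + L.get i ∈ genBy {u | u ∈ L.take i.1}) ↔ ∃ k ∈ S, 1 ≤ w k

/-- `I` has linear quotients: some ordering of `G(I)` is admissible. -/
def HasLinearQuotients {n : ℕ} (I : Set (Mon n)) : Prop :=
  ∃ L : List (Mon n), L.Nodup ∧ (∀ u, u ∈ L ↔ u ∈ minGens I) ∧ AdmissibleOrder L

/-- `I` can be extended by linear quotients to `J`: `G(I) ⊆ G(J)` and the elements of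
`G(J) \ G(I)` can be ordered `v_1,...,v_m` such that each colon ideal
`(G(I), v_1,...,v_i) : v_{i+1}` is generated by a subset of the variables. -/
def ExtendsByLinearQuotients {n : ℕ} (I J : Set (Mon n)) : Prop :=
  I ⊆ J ∧ minGens I ⊆ minGens J ∧
  ∃ L : List (Mon n), L.Nodup ∧ (∀ u, u ∈ L ↔ u ∈ minGens J ∧ u ∉ minGens I) ∧
    ∀ i : Fin L.length, ∃ S : Set (Fin n),
      ∀ w : Mon n,
        (w + L.get i ∈ genBy (minGens I ∪ {u | u ∈ L.take i.1})) ↔ ∃ k ∈ S, 1 ≤ w k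

/-- The minimal generators of `I ⊆ K[x,y]` are `u_i = x^{a i} y^{b i}`, `i = 0,...,m`,
with `a` strictly decreasing, `b` strictly increasing, `a m = 0` and `b 0 = 0`
(so `I` is `(x,y)`-primary). -/
def yxTightGens (m : ℕ) (a b : ℕ → ℕ) (I : Set (Mon 2)) : Prop :=
  (∀ i k : ℕ, i ≤ m → k ≤ m → i < k → a k < a i ∧ b i < b k) ∧
  a m = 0 ∧ b 0 = 0 ∧
  minGens I = {u | ∃ i ≤ m, u = ![a i, b i]}

/-- `I` is `x`-tight in `[0, r]`: the `x`-exponents of the generators are exactly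
`r, r-1, ..., 1, 0` (i.e. `a (r - i) = i`). -/
def xTight (I : Set (Mon 2)) (r : ℕ) : Prop :=
  ∃ b : ℕ → ℕ, yxTightGens r (fun i => r - i) b I

/-- `I` is `y`-tight in `[0, s]`: the `y`-exponents of the generators are exactly
`0, 1, ..., s`. -/
def yTight (I : Set (Mon 2)) (s : ℕ) : Prop :=
  ∃ a : ℕ → ℕ, yxTightGens s a (fun i => i) I

/-- `I` is `yx`-tight: there is `0 ≤ j ≤ m` with `b i = i` for `i = 0,...,j` and
`a (m - i) = i` for `i = 0,...,m-j`. -/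
def yxTight (I : Set (Mon 2)) : Prop :=
  ∃ (m : ℕ) (a b : ℕ → ℕ), yxTightGens m a b I ∧
    ∃ j ≤ m, (∀ i ≤ j, b i = i) ∧ ∀ i ≤ m - j, a (m - i) = i

/-- Powers of a monomial ideal. -/
def powIdeal {n : ℕ} (I : Set (Mon n)) : ℕ → Set (Mon n)
  | 0 => Set.univ
  | k + 1 => mulIdeal (powIdeal I k) I

section AuxStmt1

lemma exch_apply_fst {n : ℕ} (x : Mon n) (a b : Fin n) : exch x a b a = x a - 1 := by
  simp [exch]

lemma exch_apply_snd {n : ℕ} {x : Mon n} {a b : Fin n} (h : b ≠ a) :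
    exch x a b b = x b + 1 := by simp [exch, h]

lemma exch_apply_other {n : ℕ} {x : Mon n} {a b m : Fin n} (h1 : m ≠ a) (h2 : m ≠ b) :
    exch x a b m = x m := by simp [exch, h1, h2]

lemma eq_of_le_of_degree_le {n : ℕ} {u v : Mon n} (h : u ≤ v) (hd : degree v ≤ degree u) :
    u = v := by
  by_contra hne
  obtain ⟨k, hk⟩ := Function.ne_iff.mp hne
  have : degree u < degree v :=
    Finset.sum_lt_sum (fun m _ => h m) ⟨k, Finset.mem_univ k, lt_of_le_of_ne (h k) hk⟩
  omega

lemma degree_exch {n : ℕ} (x : Mon n) {a b : Fin n} (hab : a ≠ b) (hx : 1 ≤ x a) :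
    degree (exch x a b) = degree x := by
  unfold degree
  have hmem : b ∈ (Finset.univ : Finset (Fin n)) \ {a} := by
    simp [hab.symm]
  rw [Finset.sum_eq_sum_sdiff_singleton_add (Finset.mem_univ a),
    Finset.sum_eq_sum_sdiff_singleton_add hmem,
    Finset.sum_eq_sum_sdiff_singleton_add (Finset.mem_univ a) x,
    Finset.sum_eq_sum_sdiff_singleton_add hmem x]
  have hcong : ∑ m ∈ ((Finset.univ : Finset (Fin n)) \ {a}) \ {b}, exch x a b m
      = ∑ m ∈ ((Finset.univ : Finset (Fin n)) \ {a}) \ {b}, x m := by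
    apply Finset.sum_congr rfl
    intro m hm
    simp only [Finset.mem_sdiff, Finset.mem_singleton] at hm
    exact exch_apply_other hm.1.2 hm.2
  rw [hcong, exch_apply_fst, exch_apply_snd hab.symm]
  omega

lemma exists_minGen_le_aux {n : ℕ} (I : Set (Mon n)) :
    ∀ N : ℕ, ∀ u ∈ I, degree u ≤ N → ∃ g ∈ minGens I, g ≤ u := by
  intro N
  induction N with
  | zero =>
    intro u hu hdeg
    by_cases h : ∀ v ∈ I, v ≤ u → v = u
    · exact ⟨u, ⟨hu, h⟩, le_refl u⟩
    · push_neg at h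
      obtain ⟨v, hv, hle, hne⟩ := h
      have : degree v < degree u := lt_of_not_ge fun hge => hne (eq_of_le_of_degree_le hle hge)
      omega
  | succ N IH =>
    intro u hu hdeg
    by_cases h : ∀ v ∈ I, v ≤ u → v = u
    · exact ⟨u, ⟨hu, h⟩, le_refl u⟩
    · push_neg at h
      obtain ⟨v, hv, hle, hne⟩ := h
      have hlt : degree v < degree u := lt_of_not_ge fun hge => hne (eq_of_le_of_degree_le hle hge)
      obtain ⟨g, hg, hgle⟩ := IH v hv (by omega)
      exact ⟨g, hg, le_trans hgle hle⟩

lemma exists_minGen_le {n : ℕ} (I : Set (Mon n)) {u : Mon n} (hu : u ∈ I) :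
    ∃ g ∈ minGens I, g ≤ u :=
  exists_minGen_le_aux I (degree u) u hu le_rfl

lemma mem_minGens_of_degree {n : ℕ} {I : Set (Mon n)} {d : ℕ}
    (hsd : ∀ u ∈ minGens I, degree u = d) {w : Mon n} (hw : w ∈ I) (hdw : degree w = d) :
    w ∈ minGens I := by
  obtain ⟨g, hg, hgle⟩ := exists_minGen_le I hw
  have : g = w := eq_of_le_of_degree_le hgle (by rw [hdw, hsd g hg])
  exact this ▸ hg

end AuxStmt1

lemma key1 {n : ℕ} (I : Set (Mon n)) (d : ℕ)
    (hsd : ∀ u ∈ minGens I, degree u = d)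
    (E1 : ∀ u ∈ minGens I, ∀ v ∈ minGens I, ∀ i : Fin n, v i < u i →
      ∃ j : Fin n, u j < v j ∧ exch u i j ∈ I)
    (v : Mon n) (hv : v ∈ minGens I) (i : Fin n) (Q : Fin n → Prop) :
    ∀ N : ℕ, ∀ u' : Mon n, u' ∈ minGens I → (∑ k, (u' k - v k)) ≤ N →
      v i < u' i → (∀ k, u' k < v k → Q k) →
      ∃ j, Q j ∧ exch v j i ∈ I := by
  intro N
  induction N with
  | zero =>
    intro u' _ hdist hi _
    exfalso
    have h0 : ∑ k, (u' k - v k) = 0 := Nat.le_zero.mp hdist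
    have := Finset.sum_eq_zero_iff.mp h0 i (Finset.mem_univ i)
    omega
  | succ N IH =>
    intro u' hu' hdist hi hinv
    by_cases hA : ∃ k, k ≠ i ∧ v k < u' k
    · obtain ⟨k, hki, hk⟩ := hA
      obtain ⟨j, hj, hwI⟩ := E1 u' hu' v hv k hk
      have hjk : j ≠ k := fun h => by subst h; omega
      have hji : j ≠ i := fun h => by subst h; omega
      have hwmem : exch u' k j ∈ minGens I :=
        mem_minGens_of_degree hsd hwI
          (by rw [degree_exch u' hjk.symm (by omega), hsd u' hu'])
      have hdlt : (∑ m, (exch u' k j m - v m)) < ∑ m, (u' m - v m) := by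
        apply Finset.sum_lt_sum
        · intro m _
          rcases eq_or_ne m k with rfl | hmk
          · rw [exch_apply_fst]; omega
          · rcases eq_or_ne m j with rfl | hmj
            · rw [exch_apply_snd hjk]; omega
            · rw [exch_apply_other hmk hmj]
        · exact ⟨k, Finset.mem_univ k, by rw [exch_apply_fst]; omega⟩
      apply IH (exch u' k j) hwmem (by omega)
      · rw [exch_apply_other hki.symm hji.symm]; exact hi
      · intro m hm
        rcases eq_or_ne m k with rfl | hmk
        · rw [exch_apply_fst] at hm; omega
        · rcases eq_or_ne m j with rfl | hmj
          · exact hinv _ hj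
          · rw [exch_apply_other hmk hmj] at hm; exact hinv m hm
    · push_neg at hA
      have hB : ∀ k, k ≠ i → u' k ≤ v k := hA
      obtain ⟨j, hj, hwI⟩ := E1 u' hu' v hv i hi
      have hji : j ≠ i := fun h => by subst h; omega
      have hwmem : exch u' i j ∈ minGens I :=
        mem_minGens_of_degree hsd hwI
          (by rw [degree_exch u' hji.symm (by omega), hsd u' hu'])
      by_cases hcrit : u' i = v i + 1
      · -- exch u' i j ≤ v, so exch u' i j = v, so exch v j i = u'
        have hle : exch u' i j ≤ v := by
          intro m
          show exch u' i j m ≤ v m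
          rcases eq_or_ne m i with rfl | hmi
          · rw [exch_apply_fst]; omega
          · rcases eq_or_ne m j with rfl | hmj
            · rw [exch_apply_snd hji]; omega
            · rw [exch_apply_other hmi hmj]; exact hB m hmi
        have heq : exch u' i j = v := hv.2 (exch u' i j) hwI hle
        refine ⟨j, hinv _ hj, ?_⟩
        have : exch v j i = u' := by
          funext m
          rcases eq_or_ne m j with rfl | hmj
          · rw [exch_apply_fst, ← heq, exch_apply_snd hji]; omega
          · rcases eq_or_ne m i with rfl | hmi
            · rw [exch_apply_snd hji.symm, ← heq, exch_apply_fst]; omega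
            · rw [exch_apply_other hmj hmi, ← heq, exch_apply_other hmi hmj]
        rw [this]; exact hu'.1
      · have hdlt : (∑ m, (exch u' i j m - v m)) < ∑ m, (u' m - v m) := by
          apply Finset.sum_lt_sum
          · intro m _
            rcases eq_or_ne m i with rfl | hmi
            · rw [exch_apply_fst]; omega
            · rcases eq_or_ne m j with rfl | hmj
              · rw [exch_apply_snd hji]; omega
              · rw [exch_apply_other hmi hmj]
          · exact ⟨i, Finset.mem_univ i, by rw [exch_apply_fst]; omega⟩
        apply IH (exch u' i j) hwmem (by omega)
        · rw [exch_apply_fst]; omega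
        · intro m hm
          rcases eq_or_ne m i with rfl | hmi
          · rw [exch_apply_fst] at hm; omega
          · rcases eq_or_ne m j with rfl | hmj
            · exact hinv _ hj
            · rw [exch_apply_other hmi hmj] at hm; exact hinv m hm

lemma key2 {n : ℕ} (I : Set (Mon n)) (d : ℕ)
    (hsd : ∀ u ∈ minGens I, degree u = d)
    (E2 : ∀ u ∈ minGens I, ∀ v ∈ minGens I, degree u ≤ degree v → ∀ i : Fin n, v i < u i →
      ∃ j : Fin n, u j < v j ∧ exch v j i ∈ I)
    (u : Mon n) (hu : u ∈ minGens I) (i : Fin n) (Q : Fin n → Prop) :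
    ∀ N : ℕ, ∀ v' : Mon n, v' ∈ minGens I → (∑ k, (u k - v' k)) ≤ N →
      v' i < u i → (∀ k, u k < v' k → Q k) →
      ∃ j, Q j ∧ exch u i j ∈ I := by
  intro N
  induction N with
  | zero =>
    intro v' _ hdist hi _
    exfalso
    have h0 : ∑ k, (u k - v' k) = 0 := Nat.le_zero.mp hdist
    have := Finset.sum_eq_zero_iff.mp h0 i (Finset.mem_univ i)
    omega
  | succ N IH =>
    intro v' hv' hdist hi hinv
    have hdeg : degree u ≤ degree v' := by rw [hsd u hu, hsd v' hv']
    by_cases hA : ∃ k, k ≠ i ∧ v' k < u k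
    · obtain ⟨k, hki, hk⟩ := hA
      obtain ⟨j, hj, hwI⟩ := E2 u hu v' hv' hdeg k hk
      have hjk : j ≠ k := fun h => by subst h; omega
      have hji : j ≠ i := fun h => by subst h; omega
      have hwmem : exch v' j k ∈ minGens I :=
        mem_minGens_of_degree hsd hwI
          (by rw [degree_exch v' hjk (by omega), hsd v' hv'])
      have hdlt : (∑ m, (u m - exch v' j k m)) < ∑ m, (u m - v' m) := by
        apply Finset.sum_lt_sum
        · intro m _
          rcases eq_or_ne m j with rfl | hmj
          · rw [exch_apply_fst]; omega
          · rcases eq_or_ne m k with rfl | hmk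
            · rw [exch_apply_snd hjk.symm]; omega
            · rw [exch_apply_other hmj hmk]
        · exact ⟨k, Finset.mem_univ k, by rw [exch_apply_snd hjk.symm]; omega⟩
      apply IH (exch v' j k) hwmem (by omega)
      · rw [exch_apply_other hji.symm hki.symm]; exact hi
      · intro m hm
        rcases eq_or_ne m j with rfl | hmj
        · exact hinv _ hj
        · rcases eq_or_ne m k with rfl | hmk
          · rw [exch_apply_snd hjk.symm] at hm; omega
          · rw [exch_apply_other hmj hmk] at hm; exact hinv m hm
    · push_neg at hA
      have hB : ∀ k, k ≠ i → u k ≤ v' k := hA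
      obtain ⟨j, hj, hwI⟩ := E2 u hu v' hv' hdeg i hi
      have hji : j ≠ i := fun h => by subst h; omega
      have hwmem : exch v' j i ∈ minGens I :=
        mem_minGens_of_degree hsd hwI
          (by rw [degree_exch v' hji (by omega), hsd v' hv'])
      by_cases hcrit : u i = v' i + 1
      · -- u ≤ exch v' j i, hence u = exch v' j i, hence exch u i j = v'
        have hle : u ≤ exch v' j i := by
          intro m
          show u m ≤ exch v' j i m
          rcases eq_or_ne m j with rfl | hmj
          · rw [exch_apply_fst]; omega
          · rcases eq_or_ne m i with rfl | hmi
            · rw [exch_apply_snd hji.symm]; omega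
            · rw [exch_apply_other hmj hmi]; exact hB m hmi
        have heq : u = exch v' j i := hwmem.2 u hu.1 hle
        refine ⟨j, hinv _ hj, ?_⟩
        have : exch u i j = v' := by
          funext m
          rcases eq_or_ne m i with rfl | hmi
          · rw [exch_apply_fst, heq, exch_apply_snd hji.symm]; omega
          · rcases eq_or_ne m j with rfl | hmj
            · rw [exch_apply_snd hji, heq, exch_apply_fst]; omega
            · rw [exch_apply_other hmi hmj, heq, exch_apply_other hmj hmi]
        rw [this]; exact hv'.1
      · have hdlt : (∑ m, (u m - exch v' j i m)) < ∑ m, (u m - v' m) := by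
          apply Finset.sum_lt_sum
          · intro m _
            rcases eq_or_ne m j with rfl | hmj
            · rw [exch_apply_fst]; omega
            · rcases eq_or_ne m i with rfl | hmi
              · rw [exch_apply_snd hji.symm]; omega
              · rw [exch_apply_other hmj hmi]
          · exact ⟨i, Finset.mem_univ i, by rw [exch_apply_snd hji.symm]; omega⟩
        apply IH (exch v' j i) hwmem (by omega)
        · rw [exch_apply_snd hji.symm]; omega
        · intro m hm
          rcases eq_or_ne m j with rfl | hmj
          · exact hinv _ hj
          · rcases eq_or_ne m i with rfl | hmi
            · rw [exch_apply_snd hji.symm] at hm; omega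
            · rw [exch_apply_other hmj hmi] at hm; exact hinv m hm

/-- an ideal generated in a single degree is polymatroidal iff it has the
non-pure dual exchange property. -/
theorem stmt_1 {n : ℕ} (I : Set (Mon n)) (hI : IsMonomialIdeal I)
    (hsd : GeneratedInSingleDegree I) :
    IsPolymatroidal I ↔ NonPureDualExchange I := by
  obtain ⟨d, hd⟩ := hsd
  constructor
  · rintro ⟨_, E1⟩
    intro u hu v hv _ i hi
    exact key1 I d hd E1 v hv i (fun j => u j < v j) (∑ k, (u k - v k)) u hu le_rfl hi
      (fun k hk => hk)
  · intro E2
    refine ⟨⟨d, hd⟩, ?_⟩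
    intro u hu v hv i hi
    exact key2 I d hd E2 u hu i (fun j => u j < v j) (∑ k, (u k - v k)) v hv le_rfl hi
      (fun k hk => hk)
end

section
/- Let I ⊂ K[x,y] be a componentwise polymatroidal ideal with minimal generators u_0,...,u_m ordered by strictly decreasing x-degree, and let d_i = deg(u_i). Then the sequence (d_0,...,d_m) is unimodal in the valley sense: there exists 0 ≤ j ≤ m such that d_0 ≥ d_1 ≥ ... ≥ d_j ≤ d_{j+1} ≤ ... ≤ d_m. -/
section Aux

lemma deg_pair (x y : ℕ) : degree ![x, y] = x + y := by
  simp [degree, Fin.sum_univ_two]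

lemma pair_le {x y x' y' : ℕ} (h1 : x ≤ x') (h2 : y ≤ y') :
    (![x, y] : Mon 2) ≤ ![x', y'] := by
  intro k
  fin_cases k
  · simpa using h1
  · simpa using h2

lemma memI_of_le {n : ℕ} {I : Set (Mon n)} (hI : IsMonomialIdeal I) {g w : Mon n}
    (hg : g ∈ I) (hle : g ≤ w) : w ∈ I := by
  have h := hI g hg (w - g)
  have e : g + (w - g) = w := by
    funext k
    have h2 : g k ≤ w k := hle k
    simp only [Pi.add_apply, Pi.sub_apply]
    omega
  rwa [e] at h

lemma deg_mono {n : ℕ} {v w : Mon n} (h : v ≤ w) : degree v ≤ degree w := by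
  unfold degree
  exact Finset.sum_le_sum (fun i _ => h i)

lemma eq_of_le_of_deg {n : ℕ} {v w : Mon n} (hle : v ≤ w) (hd : degree w ≤ degree v) :
    v = w := by
  funext k
  by_contra hne
  have hlt : degree v < degree w := by
    unfold degree
    exact Finset.sum_lt_sum (fun i _ => hle i)
      ⟨k, Finset.mem_univ k, lt_of_le_of_ne (hle k) hne⟩
  omega

lemma exists_minGen {n : ℕ} (I : Set (Mon n)) : ∀ w ∈ I, ∃ u ∈ minGens I, u ≤ w := by
  have H : ∀ D : ℕ, ∀ w ∈ I, degree w ≤ D → ∃ u ∈ minGens I, u ≤ w := by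
    intro D
    induction D with
    | zero =>
      intro w hw hd
      by_cases hmin : ∀ v ∈ I, v ≤ w → v = w
      · exact ⟨w, ⟨hw, hmin⟩, le_refl w⟩
      · push_neg at hmin
        obtain ⟨v, hv, hvw, hne⟩ := hmin
        have h1 : degree v < degree w := by
          by_contra hcon
          exact hne (eq_of_le_of_deg hvw (by omega))
        omega
    | succ D ih =>
      intro w hw hd
      by_cases hmin : ∀ v ∈ I, v ≤ w → v = w
      · exact ⟨w, ⟨hw, hmin⟩, le_refl w⟩
      · push_neg at hmin
        obtain ⟨v, hv, hvw, hne⟩ := hmin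
        have h1 : degree v < degree w := by
          by_contra hcon
          exact hne (eq_of_le_of_deg hvw (by omega))
        obtain ⟨u, hu, hle⟩ := ih v hv (by omega)
        exact ⟨u, hu, le_trans hle hvw⟩
  intro w hw
  exact H (degree w) w hw (le_refl _)

lemma mem_minGens_component {n : ℕ} {I : Set (Mon n)} {d : ℕ} {u : Mon n}
    (hu : u ∈ I) (hd : degree u = d) : u ∈ minGens (component I d) := by
  constructor
  · exact ⟨u, hu, hd, le_refl u⟩
  · intro v hv hvu
    obtain ⟨u', hu', hdu', hle⟩ := hv
    have h1 : degree u' ≤ degree v := deg_mono hle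
    have h2 : degree v ≤ degree u := deg_mono hvu
    exact eq_of_le_of_deg hvu (by omega)

lemma component_subset {n : ℕ} {I : Set (Mon n)} (hI : IsMonomialIdeal I) (d : ℕ) :
    component I d ⊆ I := by
  rintro w ⟨u, hu, -, hle⟩
  exact memI_of_le hI hu hle

lemma chain_mem {I : Set (Mon 2)} (hI : IsMonomialIdeal I)
    (hcp : ComponentwisePolymatroidal I)
    {d t s t' s' : ℕ} (ht : t + s = d) (ht' : t' + s' = d)
    (hu : (![t, s] : Mon 2) ∈ I) (hv : (![t', s'] : Mon 2) ∈ I) :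
    ∀ k, k ≤ t - t' → (![t - k, s + k] : Mon 2) ∈ I := by
  intro k
  induction k with
  | zero => intro _; simpa using hu
  | succ k ih =>
    intro hk
    have hprev := ih (by omega)
    have hdu : degree (![t - k, s + k] : Mon 2) = d := by rw [deg_pair]; omega
    have hdv : degree (![t', s'] : Mon 2) = d := by rw [deg_pair]; omega
    have humin := mem_minGens_component hprev hdu
    have hvmin := mem_minGens_component hv hdv
    have hlt : (![t', s'] : Mon 2) 0 < (![t - k, s + k] : Mon 2) 0 := by
      simp only [Matrix.cons_val_zero]
      omega
    obtain ⟨j, hj, hex⟩ := (hcp d).2 _ humin _ hvmin 0 hlt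
    have hj1 : j = 1 := by
      have hjlt : j.val = 0 ∨ j.val = 1 := by omega
      rcases hjlt with h0 | h1
      · exfalso
        have hj0 : j = 0 := Fin.ext h0
        rw [hj0] at hj
        simp only [Matrix.cons_val_zero] at hj hlt
        omega
      · exact Fin.ext h1
    rw [hj1] at hex
    have he : exch (![t - k, s + k] : Mon 2) 0 1 = ![t - (k+1), s + (k+1)] := by
      funext kk
      fin_cases kk <;> simp [exch] <;> omega
    rw [he] at hex
    exact component_subset hI d hex

lemma general_lemma {I : Set (Mon 2)} (hI : IsMonomialIdeal I)
    (hcp : ComponentwisePolymatroidal I)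
    {m : ℕ} {a b : ℕ → ℕ}
    (horder : ∀ i k : ℕ, i ≤ m → k ≤ m → i < k → a k < a i ∧ b i < b k)
    (hgens : minGens I = {u | ∃ i ≤ m, u = ![a i, b i]})
    {p q : ℕ} (hpq : p < q) (hq : q < m)
    (hdp : a p + b p < a q + b q) (hdq : a (q+1) + b (q+1) < a q + b q) : False := by
  have genI : ∀ i, i ≤ m → (![a i, b i] : Mon 2) ∈ I := by
    intro i hi
    have h : (![a i, b i] : Mon 2) ∈ minGens I := by
      rw [hgens]; exact ⟨i, hi, rfl⟩
    exact h.1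
  have hbq : 1 ≤ b q := by
    have := horder 0 q (Nat.zero_le m) (le_of_lt hq) (by omega)
    omega
  have haq : a (q+1) < a q := (horder q (q+1) (by omega) (by omega) (by omega)).1
  have hap : a q < a p := (horder p q (by omega) (by omega) hpq).1
  set d := a q + b q - 1 with hd
  have hapd : a p ≤ d := by omega
  have haq1d : a (q+1) + b (q+1) ≤ d := by omega
  have hR : (![a p, d - a p] : Mon 2) ∈ I :=
    memI_of_le hI (genI p (by omega)) (pair_le (le_refl _) (by omega))
  have hL : (![a (q+1), d - a (q+1)] : Mon 2) ∈ I :=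
    memI_of_le hI (genI (q+1) (by omega)) (pair_le (le_refl _) (by omega))
  have htR : a p + (d - a p) = d := by omega
  have htL : a (q+1) + (d - a (q+1)) = d := by omega
  have hchain := chain_mem hI hcp htR htL hR hL (a p - a q) (by omega)
  have e1 : a p - (a p - a q) = a q := by omega
  have e2 : d - a p + (a p - a q) = b q - 1 := by omega
  rw [e1, e2] at hchain
  obtain ⟨u, hu, hle⟩ := exists_minGen I _ hchain
  rw [hgens] at hu
  obtain ⟨i, him, rfl⟩ := hu
  have h0 : a i ≤ a q := by simpa using hle 0
  have h1 : b i ≤ b q - 1 := by simpa using hle 1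
  rcases lt_trichotomy i q with h | h | h
  · have := (horder i q (by omega) (by omega) h).1
    omega
  · subst h
    omega
  · have := (horder q i (by omega) him h).2
    omega

lemma mono_chain (a b : ℕ → ℕ) :
    ∀ k s, (∀ r, s ≤ r → r < s + k → a r + b r ≤ a (r+1) + b (r+1)) →
      a s + b s ≤ a (s+k) + b (s+k) := by
  intro k
  induction k with
  | zero => intro s _; exact le_refl _
  | succ k ih =>
    intro s h
    have h1 : a s + b s ≤ a (s + k) + b (s + k) := ih s (fun r hr hrk => h r hr (by omega))
    have h2 : a (s + k) + b (s + k) ≤ a (s + k + 1) + b (s + k + 1) :=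
      h (s + k) (by omega) (by omega)
    show a s + b s ≤ a (s + k + 1) + b (s + k + 1)
    omega

lemma U_lemma {I : Set (Mon 2)} (hI : IsMonomialIdeal I)
    (hcp : ComponentwisePolymatroidal I)
    {m : ℕ} {a b : ℕ → ℕ}
    (horder : ∀ i k : ℕ, i ≤ m → k ≤ m → i < k → a k < a i ∧ b i < b k)
    (hgens : minGens I = {u | ∃ i ≤ m, u = ![a i, b i]}) :
    ∀ N p q, q - p ≤ N → p < q → q < m →
      a p + b p < a (p+1) + b (p+1) → a (q+1) + b (q+1) < a q + b q → False := by
  intro N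
  induction N with
  | zero => intro p q h hpq _ _ _; omega
  | succ N ih =>
    intro p q hN hpq hq hasc hdesc
    by_cases hcase : a p + b p < a q + b q
    · exact general_lemma hI hcp horder hgens hpq hq hcase hdesc
    · push_neg at hcase
      have hp1q : p + 1 < q := by
        by_contra hcon
        have hq' : q = p + 1 := by omega
        rw [hq'] at hcase
        omega
      have hex : ∃ j, p + 1 ≤ j ∧ j < q ∧ a (j+1) + b (j+1) < a j + b j := by
        by_contra hno
        push_neg at hno
        have hm := mono_chain a b (q - (p+1)) (p+1)
          (fun r hr hrk => hno r hr (by omega))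
        have heq : p + 1 + (q - (p+1)) = q := by omega
        rw [heq] at hm
        omega
      obtain ⟨j, hj1, hj2, hjdesc⟩ := hex
      exact ih p j (by omega) (by omega) (by omega) hasc hjdesc

end Aux

/-- for a componentwise polymatroidal ideal in `K[x,y]` the degree sequence
`d i = deg u_i` of the minimal generators is valley-unimodal:
`d 0 ≥ ... ≥ d j ≤ ... ≤ d m` for some `j`. -/
theorem stmt_7 (I : Set (Mon 2)) (hI : IsMonomialIdeal I)
    (hcp : ComponentwisePolymatroidal I)
    (m : ℕ) (a b : ℕ → ℕ)
    (horder : ∀ i k : ℕ, i ≤ m → k ≤ m → i < k → a k < a i ∧ b i < b k)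
    (hgens : minGens I = {u | ∃ i ≤ m, u = ![a i, b i]}) :
    ∃ j ≤ m, (∀ i : ℕ, i < j → a (i+1) + b (i+1) ≤ a i + b i) ∧
             (∀ i : ℕ, j ≤ i → i < m → a i + b i ≤ a (i+1) + b (i+1)) := by
  by_cases hex : ∃ r, r < m ∧ a (r+1) + b (r+1) < a r + b r
  · obtain ⟨r0, hr0⟩ := hex
    have hq0 := Nat.findGreatest_spec (P := fun r => r < m ∧ a (r+1) + b (r+1) < a r + b r)
      (le_of_lt hr0.1) hr0
    set q0 := Nat.findGreatest (fun r => r < m ∧ a (r+1) + b (r+1) < a r + b r) m with hq0def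
    obtain ⟨hq0m, hq0d⟩ := hq0
    refine ⟨q0 + 1, by omega, ?_, ?_⟩
    · intro i hi
      rcases Nat.lt_or_ge i q0 with h | h
      · by_contra hcon
        push_neg at hcon
        exact U_lemma hI hcp horder hgens q0 i q0 (by omega) h hq0m hcon hq0d
      · have hiq : i = q0 := by omega
        rw [hiq]
        omega
    · intro i hji him
      by_contra hcon
      push_neg at hcon
      have hni : ¬ (i < m ∧ a (i+1) + b (i+1) < a i + b i) :=
        Nat.findGreatest_is_greatest
          (P := fun r => r < m ∧ a (r+1) + b (r+1) < a r + b r) (n := m)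
          (by omega) (le_of_lt him)
      exact hni ⟨him, hcon⟩
  · push_neg at hex
    exact ⟨0, Nat.zero_le m, fun i hi => absurd hi (Nat.not_lt_zero i),
      fun i _ him => hex i him⟩
end
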